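/- Let $G=(V,E)$ be a finite simple graph, $w: V \to \mathbb{C}$ a weight function, and suppose there exists $\rho: V \to \mathbb{R}_{>0}$ such that for every vertex $v$, $\sum_{u\in\mathcal{N}_v} |w(u)| e^{\rho(u)} \le \rho(v)$, where $\mathcal{N}_v = \{v\}\cup\{u : \{u,v\}\in E\}$. Then the independence polynomial $\mathrm{Ind}_G(w) = \sum_{S\subseteq V \text{ independent}} \prod_{v\in S} w(v)$ is nonzero. -/

import Mathlib

open Finset

namespace Stmt4

variable {V : Type*} [Fintype V] [DecidableEq V]
variable (G : SimpleGraph V) [DecidableRel G.Adj] (w : V → ℂ)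

noncomputable def Z (A : Finset V) : ℂ :=
  ∑ S ∈ A.powerset.filter (fun S : Finset V => ∀ u ∈ S, ∀ v ∈ S, ¬ G.Adj u v),
    ∏ v ∈ S, w v

lemma Z_empty : Z G w ∅ = 1 := by
  simp [Z, Finset.filter_singleton]

lemma Z_rec {A : Finset V} {v : V} (hv : v ∈ A) :
    Z G w A = Z G w (A.erase v)
      + w v * Z G w (A \ insert v (G.neighborFinset v)) := by
  classical
  unfold Z
  rw [← Finset.sum_filter_add_sum_filter_not
        (A.powerset.filter (fun S : Finset V => ∀ u ∈ S, ∀ v ∈ S, ¬ G.Adj u v))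
        (fun S => v ∈ S)]
  rw [add_comm]
  congr 1
  · apply Finset.sum_congr
    · ext S
      simp only [mem_filter, mem_powerset, Finset.subset_erase]
      tauto
    · intro _ _; rfl
  · rw [Finset.mul_sum]
    refine Finset.sum_bij' (fun S _ => S.erase v) (fun T _ => insert v T)
      ?_ ?_ ?_ ?_ ?_
    · intro S hS
      simp only [mem_filter, mem_powerset] at hS ⊢
      obtain ⟨⟨hSA, hind⟩, hvS⟩ := hS
      refine ⟨?_, ?_⟩
      · intro u hu
        have huS := Finset.mem_of_mem_erase hu
        have hune := Finset.ne_of_mem_erase hu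
        simp only [Finset.mem_sdiff, Finset.mem_insert, SimpleGraph.mem_neighborFinset]
        exact ⟨hSA huS, by
          push_neg
          exact ⟨hune, fun hadj => hind v hvS u huS hadj⟩⟩
      · intro a ha b hb
        exact hind a (Finset.mem_of_mem_erase ha) b (Finset.mem_of_mem_erase hb)
    · intro T hT
      simp only [mem_filter, mem_powerset] at hT ⊢
      obtain ⟨hTA, hind⟩ := hT
      have hvT : v ∉ T := by
        intro hvT
        have := hTA hvT
        simp [Finset.mem_sdiff] at this
      refine ⟨⟨?_, ?_⟩, Finset.mem_insert_self v T⟩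
      · intro u hu
        rcases Finset.mem_insert.mp hu with rfl | hu
        · exact hv
        · exact (Finset.mem_sdiff.mp (hTA hu)).1
      · intro a ha b hb hadj
        rcases Finset.mem_insert.mp ha with h1 | h1
        · rcases Finset.mem_insert.mp hb with h2 | h2
          · subst h1; subst h2; exact G.loopless.irrefl _ hadj
          · subst h1
            have := (Finset.mem_sdiff.mp (hTA h2)).2
            simp [SimpleGraph.mem_neighborFinset] at this
            exact this.2 hadj
        · rcases Finset.mem_insert.mp hb with h2 | h2
          · subst h2
            have := (Finset.mem_sdiff.mp (hTA h1)).2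
            simp [SimpleGraph.mem_neighborFinset] at this
            exact this.2 hadj.symm
          · exact hind a h1 b h2 hadj
    · intro S hS
      simp only [mem_filter] at hS
      exact Finset.insert_erase hS.2
    · intro T hT
      simp only [mem_filter, mem_powerset] at hT
      have hvT : v ∉ T := by
        intro hvT
        have := hT.1 hvT
        simp [Finset.mem_sdiff] at this
      exact Finset.erase_insert hvT
    · intro S hS
      simp only [mem_filter] at hS
      exact (Finset.mul_prod_erase S w hS.2).symm

lemma removal (ρ : V → ℝ) (A0 : Finset V)
    (IH : ∀ B ⊂ A0, Z G w B ≠ 0 ∧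
      ∀ v ∈ B, ‖Z G w (B.erase v)‖ ≤
        Real.exp (‖w v‖ * Real.exp (ρ v)) * ‖Z G w B‖) :
    ∀ D A' : Finset V, A' ⊂ A0 → D ⊆ A' →
      ‖Z G w (A' \ D)‖ ≤
        (∏ u ∈ D, Real.exp (‖w u‖ * Real.exp (ρ u))) * ‖Z G w A'‖ := by
  intro D
  induction D using Finset.induction_on with
  | empty => intro A' h1 h2; simp
  | @insert u D hu ih =>
    intro A' hA' hsub
    have huA' : u ∈ A' := hsub (Finset.mem_insert_self u D)
    have hDA' : D ⊆ A' := fun x hx => hsub (Finset.mem_insert_of_mem hx)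
    have heq : A' \ insert u D = (A' \ D).erase u := by
      ext x
      simp only [Finset.mem_sdiff, Finset.mem_erase, Finset.mem_insert]
      tauto
    have hsd : A' \ D ⊂ A0 := lt_of_le_of_lt (Finset.sdiff_subset) hA'
    have husd : u ∈ A' \ D := Finset.mem_sdiff.mpr ⟨huA', hu⟩
    have h1 := (IH _ hsd).2 u husd
    have h2 := ih A' hA' hDA'
    rw [heq, Finset.prod_insert hu]
    calc ‖Z G w ((A' \ D).erase u)‖
        ≤ Real.exp (‖w u‖ * Real.exp (ρ u)) * ‖Z G w (A' \ D)‖ := h1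
      _ ≤ Real.exp (‖w u‖ * Real.exp (ρ u)) *
          ((∏ u ∈ D, Real.exp (‖w u‖ * Real.exp (ρ u))) * ‖Z G w A'‖) := by
          apply mul_le_mul_of_nonneg_left h2 (Real.exp_pos _).le
      _ = _ := by ring

lemma main (ρ : V → ℝ) (hρ : ∀ v, 0 < ρ v)
    (h : ∀ v, ∑ u ∈ insert v (G.neighborFinset v), ‖w u‖ * Real.exp (ρ u) ≤ ρ v)
    (A : Finset V) : Z G w A ≠ 0 ∧
      ∀ v ∈ A, ‖Z G w (A.erase v)‖ ≤
        Real.exp (‖w v‖ * Real.exp (ρ v)) * ‖Z G w A‖ := by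
  induction A using Finset.strongInduction with
  | _ A IH =>
  have key : ∀ v ∈ A, Z G w A ≠ 0 ∧
      ‖Z G w (A.erase v)‖ ≤ Real.exp (‖w v‖ * Real.exp (ρ v)) * ‖Z G w A‖ := by
    intro v hv
    set t := ‖w v‖ * Real.exp (ρ v) with ht
    have htnn : 0 ≤ t := mul_nonneg (norm_nonneg _) (Real.exp_pos _).le
    have hA' : A.erase v ⊂ A := Finset.erase_ssubset hv
    have hZA' : Z G w (A.erase v) ≠ 0 := (IH _ hA').1
    have hrec := Z_rec G w hv
    set B := A \ insert v (G.neighborFinset v) with hB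
    have hBeq : B = (A.erase v) \ (G.neighborFinset v ∩ A.erase v) := by
      ext x
      simp only [hB, Finset.mem_sdiff, Finset.mem_erase, Finset.mem_insert,
        Finset.mem_inter]
      tauto
    have hrem := removal G w ρ A IH (G.neighborFinset v ∩ A.erase v)
      (A.erase v) hA' Finset.inter_subset_right
    rw [← hBeq] at hrem
    -- bound the product of exponentials
    have hprod : (∏ u ∈ G.neighborFinset v ∩ A.erase v,
        Real.exp (‖w u‖ * Real.exp (ρ u))) ≤ Real.exp (ρ v - t) := by
      rw [← Real.exp_sum]
      apply Real.exp_le_exp.mpr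
      have hsum1 : ∑ u ∈ G.neighborFinset v ∩ A.erase v, ‖w u‖ * Real.exp (ρ u)
          ≤ ∑ u ∈ G.neighborFinset v, ‖w u‖ * Real.exp (ρ u) := by
        apply Finset.sum_le_sum_of_subset_of_nonneg Finset.inter_subset_left
        intro i _ _
        exact mul_nonneg (norm_nonneg _) (Real.exp_pos _).le
      have hvnot : v ∉ G.neighborFinset v := by
        simp [SimpleGraph.mem_neighborFinset]
      have hsum2 := h v
      rw [Finset.sum_insert hvnot] at hsum2
      linarith
    have hZB : ‖w v * Z G w B‖ ≤ t * Real.exp (-t) * ‖Z G w (A.erase v)‖ := by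
      rw [norm_mul]
      calc ‖w v‖ * ‖Z G w B‖
          ≤ ‖w v‖ * (Real.exp (ρ v - t) * ‖Z G w (A.erase v)‖) := by
            apply mul_le_mul_of_nonneg_left _ (norm_nonneg _)
            exact le_trans hrem (mul_le_mul_of_nonneg_right hprod (norm_nonneg _))
        _ = t * Real.exp (-t) * ‖Z G w (A.erase v)‖ := by
            rw [ht, Real.exp_sub]
            rw [Real.exp_neg]
            field_simp
    -- key scalar inequality : 1 - t e^{-t} ≥ e^{-t}
    have hkey : Real.exp (-t) ≤ 1 - t * Real.exp (-t) := by
      have h1 : t + 1 ≤ Real.exp t := Real.add_one_le_exp t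
      have h2 : 0 < Real.exp t := Real.exp_pos t
      have h3 : Real.exp t * (Real.exp t)⁻¹ = 1 := mul_inv_cancel₀ (ne_of_gt h2)
      have h4 : 0 < (Real.exp t)⁻¹ := inv_pos.mpr h2
      rw [Real.exp_neg]
      nlinarith
    have hlow : Real.exp (-t) * ‖Z G w (A.erase v)‖ ≤ ‖Z G w A‖ := by
      have htri : ‖Z G w (A.erase v)‖ ≤ ‖Z G w A‖ + ‖w v * Z G w B‖ := by
        have : Z G w (A.erase v) = Z G w A - w v * Z G w B := by
          rw [hrec]; ring
        rw [this]
        exact norm_sub_le _ _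
      nlinarith [norm_nonneg (Z G w (A.erase v)), norm_nonneg (Z G w A)]
    have hApos : 0 < ‖Z G w A‖ := by
      have : 0 < Real.exp (-t) * ‖Z G w (A.erase v)‖ :=
        mul_pos (Real.exp_pos _) (norm_pos_iff.mpr hZA')
      linarith
    refine ⟨norm_pos_iff.mp hApos, ?_⟩
    have := mul_le_mul_of_nonneg_left hlow (Real.exp_pos t).le
    rw [← mul_assoc, ← Real.exp_add] at this
    simpa using this
  rcases A.eq_empty_or_nonempty with rfl | ⟨v0, hv0⟩
  · simp [Z_empty]
  · exact ⟨(key v0 hv0).1, fun v hv => (key v hv).2⟩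

end Stmt4

theorem stmt_4 {V : Type*} [Fintype V] [DecidableEq V]
    (G : SimpleGraph V) [DecidableRel G.Adj] (w : V → ℂ)
    (ρ : V → ℝ) (hρ : ∀ v, 0 < ρ v)
    (h : ∀ v, ∑ u ∈ insert v (G.neighborFinset v), ‖w u‖ * Real.exp (ρ u) ≤ ρ v) :
    ∑ S ∈ Finset.univ.powerset.filter
        (fun S : Finset V => ∀ u ∈ S, ∀ v ∈ S, ¬ G.Adj u v),
      ∏ v ∈ S, w v ≠ 0 := by
  have := (Stmt4.main G w ρ hρ h Finset.univ).1
  unfold Stmt4.Z at this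
  convert this using 2
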